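/- Let (x^k)_{k∈ℕ} be a sequence generated by the ASI algorithm with delay bound τ ≥ 0, let z ∈ C, let μ > 0, and suppose there is ε > 0 such that ε ≤ λ_k ≤ 1/(1 + τ(1/μ + μ) + ε) for all k ∈ ℕ. Define c_j := (τ + 1 − j)μ + ε for j = 1, ..., τ+1. Then the sequence ξ_k := ‖x^k − z‖² + Σ_{ℓ=1}^{τ} c_ℓ ‖x^{k+1−ℓ} − x^{k−ℓ}‖² (with x^{j} understood as x^{1} for j ≤ 0) is a convergent sequence of real numbers. -/

import Mathlib

open Filter

private lemma asi_young (μ A B : ℝ) (hμ : 0 < μ) : 2 * A * B ≤ μ * A ^ 2 + B ^ 2 / μ := by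
  have h : μ * A ^ 2 + B ^ 2 / μ - 2 * A * B = (μ * A - B) ^ 2 / μ := by
    field_simp
    ring
  have h2 : 0 ≤ (μ * A - B) ^ 2 / μ := div_nonneg (sq_nonneg _) hμ.le
  linarith [h, h2]

private lemma asi_tel {H : Type*} [NormedAddCommGroup H] (x : ℕ → H) (k : ℕ) :
    ∀ d : ℕ, ‖x k - x (k - d)‖ ≤ ∑ i ∈ Finset.range d, ‖x (k - i) - x (k - i - 1)‖ := by
  intro d
  induction d with
  | zero => simp
  | succ d ih =>
    rw [Finset.sum_range_succ]
    have e : k - (d + 1) = k - d - 1 := by omega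
    calc ‖x k - x (k - (d + 1))‖
        ≤ ‖x k - x (k - d)‖ + ‖x (k - d) - x (k - (d + 1))‖ :=
          norm_sub_le_norm_sub_add_norm_sub _ _ _
      _ ≤ (∑ i ∈ Finset.range d, ‖x (k - i) - x (k - i - 1)‖) + ‖x (k - d) - x (k - d - 1)‖ := by
          rw [e]; exact add_le_add_left ih _

/-- Lemma 4 of the paper. Let `x` be a sequence generated by the ASI
algorithm with delay bound `τ ≥ 0`, `z ∈ C`, `μ > 0`, and suppose there is `ε > 0` with
`ε ≤ λ k ≤ 1/(1 + τ(1/μ + μ) + ε)` for all `k`. With `c j := (τ + 1 - j)μ + ε`, the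
sequence `ξ k := ‖x k - z‖² + ∑_{ℓ=1}^{τ} c ℓ ‖x (k+1-ℓ) - x (k-ℓ)‖²`
(indices `j ≤ 0` understood as `1`, encoded by `x 0 = x 1` with truncated subtraction)
is a convergent sequence of real numbers. -/
theorem asi_xi_converges
    {H : Type*} [NormedAddCommGroup H] [InnerProductSpace ℝ H] [CompleteSpace H]
    (m : ℕ) (hm : 1 ≤ m) (T : Fin m → H → H)
    (hT : ∀ i, ∀ u v : H, ‖T i u - T i v‖ ≤ ‖u - v‖)
    (x : ℕ → H) (lam : ℕ → ℝ) (idx : ℕ → Fin m) (d : ℕ → ℕ) (τ : ℕ)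
    (hlam : ∀ k, 0 < lam k ∧ lam k < 1)
    (hd : ∀ k, d k ≤ min τ (k - 1))
    (hx0 : x 0 = x 1)
    (hup : ∀ k, 1 ≤ k → x (k + 1) =
      if k ≤ τ then x k
      else x k - lam k • (x (k - d k) - T (idx k) (x (k - d k))))
    (z : H) (hz : ∀ i, T i z = z)
    (μ : ℝ) (hμ : 0 < μ)
    (ε : ℝ) (hε : 0 < ε)
    (hlam2 : ∀ k, ε ≤ lam k ∧ lam k ≤ 1 / (1 + (τ : ℝ) * (1 / μ + μ) + ε))
    (c : ℕ → ℝ) (hc : ∀ j, c j = ((τ : ℝ) + 1 - (j : ℝ)) * μ + ε)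
    (ξ : ℕ → ℝ)
    (hξ : ∀ k, ξ k = ‖x k - z‖ ^ 2
      + ∑ l ∈ Finset.Icc 1 τ, c l * ‖x (k + 1 - l) - x (k - l)‖ ^ 2) :
    ∃ L : ℝ, Tendsto ξ atTop (nhds L) := by
  -- rewrite the ξ-sums over `range τ`
  have hsum : ∀ j : ℕ, ∑ l ∈ Finset.Icc 1 τ, c l * ‖x (j + 1 - l) - x (j - l)‖ ^ 2
      = ∑ i ∈ Finset.range τ, c (i + 1) * ‖x (j - i) - x (j - i - 1)‖ ^ 2 := by
    intro j
    rw [← Finset.Ico_add_one_right_eq_Icc, Finset.sum_Ico_eq_sum_range]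
    have e0 : τ + 1 - 1 = τ := by omega
    rw [e0]
    refine Finset.sum_congr rfl fun i _ => ?_
    have e1 : j + 1 - (1 + i) = j - i := by omega
    have e2 : j - (1 + i) = j - i - 1 := by omega
    rw [e1, e2, add_comm 1 i]
  have hC : (0:ℝ) < 1 + (τ : ℝ) * (1 / μ + μ) + ε := by
    have h1 : (0:ℝ) ≤ (τ : ℝ) := Nat.cast_nonneg τ
    have h2 : 0 < 1 / μ + μ := by positivity
    nlinarith
  -- main monotonicity
  have hmono : ∀ k, τ + 1 ≤ k → ξ (k + 1) ≤ ξ k := by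
    intro k hk
    have hk1 : 1 ≤ k := by omega
    have hkτ : ¬ k ≤ τ := by omega
    have hstep : x (k + 1) = x k - lam k • (x (k - d k) - T (idx k) (x (k - d k))) := by
      rw [hup k hk1, if_neg hkτ]
    set u : H := x (k - d k) with hu
    set S : H := u - T (idx k) u with hS
    set lk : ℝ := lam k with hlk
    have hlk0 : 0 < lk := (hlam k).1
    have hlkC : lk * (1 + (τ : ℝ) * (1 / μ + μ) + ε) ≤ 1 := by
      have h := (hlam2 k).2
      rw [le_div_iff₀ hC] at h
      exact h
    -- cocoercivity: ‖S‖² ≤ 2⟪u - z, S⟫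
    have hcoco : ‖S‖ ^ 2 ≤ 2 * (inner ℝ (u - z) S : ℝ) := by
      have h1 : ‖T (idx k) u - T (idx k) z‖ ≤ ‖u - z‖ := hT (idx k) u z
      rw [hz] at h1
      have h2 : T (idx k) u - z = (u - z) - S := by rw [hS]; abel
      have h3 : ‖(u - z) - S‖ ^ 2 ≤ ‖u - z‖ ^ 2 := by
        rw [← h2]
        exact pow_le_pow_left₀ (norm_nonneg _) h1 2
      rw [norm_sub_sq_real] at h3
      linarith only [h3]
    -- delay bound
    have hdel : ‖x k - u‖ ≤ ∑ i ∈ Finset.range τ, ‖x (k - i) - x (k - i - 1)‖ := by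
      refine le_trans (asi_tel x k (d k)) ?_
      refine Finset.sum_le_sum_of_subset_of_nonneg ?_ (fun i _ _ => norm_nonneg _)
      exact Finset.range_subset_range.mpr (le_trans (hd k) (min_le_left _ _))
    have hip : -((∑ i ∈ Finset.range τ, ‖x (k - i) - x (k - i - 1)‖) * ‖S‖)
        ≤ (inner ℝ (x k - u) S : ℝ) := by
      have h1 : |(inner ℝ (x k - u) S : ℝ)| ≤ ‖x k - u‖ * ‖S‖ := abs_real_inner_le_norm _ _
      have h2 : ‖x k - u‖ * ‖S‖ ≤ (∑ i ∈ Finset.range τ, ‖x (k - i) - x (k - i - 1)‖) * ‖S‖ :=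
        mul_le_mul_of_nonneg_right hdel (norm_nonneg _)
      have h3 := neg_abs_le (inner ℝ (x k - u) S : ℝ)
      linarith only [h1, h2, h3]
    -- expansion of the distance
    have hexp : ‖x (k + 1) - z‖ ^ 2
        = ‖x k - z‖ ^ 2 - 2 * lk * (inner ℝ (x k - z) S : ℝ) + lk ^ 2 * ‖S‖ ^ 2 := by
      rw [hstep, sub_right_comm, norm_sub_sq_real, real_inner_smul_right, norm_smul,
        Real.norm_eq_abs, mul_pow, sq_abs]
      ring
    have hsplit : (inner ℝ (x k - z) S : ℝ)
        = (inner ℝ (u - z) S : ℝ) + (inner ℝ (x k - u) S : ℝ) := by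
      rw [← inner_add_left]
      congr 1
      abel
    -- Young's inequality applied to each delay term
    have hyoung : 2 * lk * ‖S‖ * (∑ i ∈ Finset.range τ, ‖x (k - i) - x (k - i - 1)‖)
        ≤ μ * (∑ i ∈ Finset.range τ, ‖x (k - i) - x (k - i - 1)‖ ^ 2)
          + (τ : ℝ) * (lk ^ 2 / μ) * ‖S‖ ^ 2 := by
      have h1 : ∀ i ∈ Finset.range τ, 2 * lk * ‖S‖ * ‖x (k - i) - x (k - i - 1)‖
          ≤ μ * ‖x (k - i) - x (k - i - 1)‖ ^ 2 + lk ^ 2 / μ * ‖S‖ ^ 2 := by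
        intro i _
        have h := asi_young μ (‖x (k - i) - x (k - i - 1)‖) (lk * ‖S‖) hμ
        have e : (lk * ‖S‖) ^ 2 / μ = lk ^ 2 / μ * ‖S‖ ^ 2 := by
          rw [mul_pow]
          ring
        rw [e] at h
        linarith only [h]
      calc 2 * lk * ‖S‖ * (∑ i ∈ Finset.range τ, ‖x (k - i) - x (k - i - 1)‖)
          = ∑ i ∈ Finset.range τ, 2 * lk * ‖S‖ * ‖x (k - i) - x (k - i - 1)‖ := by
            rw [Finset.mul_sum]
        _ ≤ ∑ i ∈ Finset.range τ, (μ * ‖x (k - i) - x (k - i - 1)‖ ^ 2 + lk ^ 2 / μ * ‖S‖ ^ 2) :=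
            Finset.sum_le_sum h1
        _ = μ * (∑ i ∈ Finset.range τ, ‖x (k - i) - x (k - i - 1)‖ ^ 2)
            + (τ : ℝ) * (lk ^ 2 / μ) * ‖S‖ ^ 2 := by
            rw [Finset.sum_add_distrib, ← Finset.mul_sum, Finset.sum_const, Finset.card_range,
              nsmul_eq_mul]
            ring
    -- distance decrease estimate
    have hkey : ‖x (k + 1) - z‖ ^ 2 ≤ ‖x k - z‖ ^ 2
        + (lk ^ 2 * (1 + (τ : ℝ) / μ) - lk) * ‖S‖ ^ 2
        + μ * (∑ i ∈ Finset.range τ, ‖x (k - i) - x (k - i - 1)‖ ^ 2) := by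
      rw [hexp, hsplit]
      have h1 : lk * ‖S‖ ^ 2 ≤ lk * (2 * (inner ℝ (u - z) S : ℝ)) :=
        mul_le_mul_of_nonneg_left hcoco hlk0.le
      have h2 : lk * (-((∑ i ∈ Finset.range τ, ‖x (k - i) - x (k - i - 1)‖) * ‖S‖))
          ≤ lk * (inner ℝ (x k - u) S : ℝ) :=
        mul_le_mul_of_nonneg_left hip hlk0.le
      have h3 : (τ : ℝ) * (lk ^ 2 / μ) * ‖S‖ ^ 2 = lk ^ 2 * ((τ : ℝ) / μ) * ‖S‖ ^ 2 := by
        ring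
      linarith only [h1, h2, h3, hyoung]
    -- now compute ξ (k+1) - ξ k
    have hxdiff : ‖x (k + 1) - x k‖ ^ 2 = lk ^ 2 * ‖S‖ ^ 2 := by
      rw [hstep, sub_sub_cancel_left, norm_neg, norm_smul, Real.norm_eq_abs, mul_pow, sq_abs]
    have hcsucc : ∀ i : ℕ, c (i + 2) = c (i + 1) - μ := by
      intro i
      rw [hc, hc]
      push_cast
      ring
    rw [hξ, hξ, hsum, hsum]
    rcases Nat.eq_zero_or_pos τ with hτ | hτ
    · subst hτ
      simp only [Finset.range_zero, Finset.sum_empty, add_zero]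
      simp only [Nat.cast_zero, Finset.range_zero, Finset.sum_empty, mul_zero, add_zero,
        zero_div] at hkey
      push_cast at hlkC
      have hle1 : lk ≤ 1 := by linarith only [hlkC, mul_pos hlk0 hε]
      have h4 : lk ^ 2 * (1 + 0) - lk ≤ 0 := by
        have h5 := mul_le_mul_of_nonneg_left hle1 hlk0.le
        have h6 : lk ^ 2 = lk * lk := sq lk
        linarith only [h5, h6]
      linarith only [hkey, mul_nonpos_of_nonpos_of_nonneg h4 (sq_nonneg ‖S‖)]
    · obtain ⟨n, rfl⟩ : ∃ n, τ = n + 1 := ⟨τ - 1, by omega⟩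
      -- shifted delay terms
      have hshift : ∀ i : ℕ, ‖x (k + 1 - (i + 1)) - x (k + 1 - (i + 1) - 1)‖
          = ‖x (k - i) - x (k - i - 1)‖ := by
        intro i
        have e1 : k + 1 - (i + 1) = k - i := by omega
        have e2 : k + 1 - (i + 1) - 1 = k - i - 1 := by omega
        rw [e2, e1]
      have hfirst : ‖x (k + 1 - 0) - x (k + 1 - 0 - 1)‖ ^ 2 = lk ^ 2 * ‖S‖ ^ 2 := by
        simpa using hxdiff
      have hsum1 : ∑ i ∈ Finset.range (n + 1),
            c (i + 1) * ‖x (k + 1 - i) - x (k + 1 - i - 1)‖ ^ 2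
          = (∑ i ∈ Finset.range n, c (i + 1) * ‖x (k - i) - x (k - i - 1)‖ ^ 2)
            - μ * (∑ i ∈ Finset.range n, ‖x (k - i) - x (k - i - 1)‖ ^ 2)
            + c 1 * (lk ^ 2 * ‖S‖ ^ 2) := by
        rw [Finset.sum_range_succ']
        have h5 : ∀ i ∈ Finset.range n,
            c (i + 1 + 1) * ‖x (k + 1 - (i + 1)) - x (k + 1 - (i + 1) - 1)‖ ^ 2
            = c (i + 1) * ‖x (k - i) - x (k - i - 1)‖ ^ 2
              - μ * ‖x (k - i) - x (k - i - 1)‖ ^ 2 := by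
          intro i _
          rw [hshift i]
          have : c (i + 1 + 1) = c (i + 1) - μ := hcsucc i
          rw [this]
          ring
        rw [Finset.sum_congr rfl h5, Finset.sum_sub_distrib, ← Finset.mul_sum, hfirst]
      have hsum2 : ∑ i ∈ Finset.range (n + 1), c (i + 1) * ‖x (k - i) - x (k - i - 1)‖ ^ 2
          = (∑ i ∈ Finset.range n, c (i + 1) * ‖x (k - i) - x (k - i - 1)‖ ^ 2)
            + c (n + 1) * ‖x (k - n) - x (k - n - 1)‖ ^ 2 :=
        Finset.sum_range_succ _ n
      have hsum3 : ∑ i ∈ Finset.range (n + 1), ‖x (k - i) - x (k - i - 1)‖ ^ 2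
          = (∑ i ∈ Finset.range n, ‖x (k - i) - x (k - i - 1)‖ ^ 2)
            + ‖x (k - n) - x (k - n - 1)‖ ^ 2 :=
        Finset.sum_range_succ _ n
      rw [hsum1, hsum2]
      rw [hsum3] at hkey
      have hc1 : c 1 = ((n : ℝ) + 1) * μ + ε := by rw [hc]; push_cast; ring
      have hcn : c (n + 1) = μ + ε := by rw [hc]; push_cast; ring
      push_cast at hkey hlkC
      -- coefficient of ‖S‖²
      have hcoef : lk ^ 2 * (1 + ((n : ℝ) + 1) / μ) - lk + c 1 * lk ^ 2 ≤ 0 := by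
        rw [hc1]
        have h6 := mul_le_mul_of_nonneg_left hlkC hlk0.le
        have h7 : ((n : ℝ) + 1) / μ = ((n : ℝ) + 1) * (1 / μ) := by ring
        rw [h7]
        linarith only [h6]
      have h8 : (lk ^ 2 * (1 + ((n : ℝ) + 1) / μ) - lk + c 1 * lk ^ 2) * ‖S‖ ^ 2 ≤ 0 :=
        mul_nonpos_of_nonpos_of_nonneg hcoef (sq_nonneg _)
      have h9 : 0 ≤ ε * ‖x (k - n) - x (k - n - 1)‖ ^ 2 :=
        mul_nonneg hε.le (sq_nonneg _)
      rw [hcn]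
      linarith only [hkey, h8, h9]
  -- ξ is nonnegative
  have hpos : ∀ k, 0 ≤ ξ k := by
    intro k
    rw [hξ]
    refine add_nonneg (sq_nonneg _) (Finset.sum_nonneg fun l hl => ?_)
    have hl2 : (l : ℝ) ≤ (τ : ℝ) := by
      exact_mod_cast (Finset.mem_Icc.mp hl).2
    have hcl : 0 ≤ c l := by rw [hc]; nlinarith
    exact mul_nonneg hcl (sq_nonneg _)
  -- convergence of eventually-antitone bounded sequence
  have hYanti : Antitone (fun n => ξ (n + (τ + 1))) := by
    refine antitone_nat_of_succ_le fun n => ?_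
    have e : n + 1 + (τ + 1) = (n + (τ + 1)) + 1 := by omega
    show ξ (n + 1 + (τ + 1)) ≤ ξ (n + (τ + 1))
    rw [e]
    exact hmono _ (by omega)
  have hYbdd : BddBelow (Set.range fun n => ξ (n + (τ + 1))) := by
    refine ⟨0, ?_⟩
    rintro y ⟨n, rfl⟩
    exact hpos _
  have hYconv := tendsto_atTop_ciInf hYanti hYbdd
  exact ⟨_, (tendsto_add_atTop_iff_nat (τ + 1)).mp hYconv⟩
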